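/- arXiv:1810.10089 — 2 statements merged into one kernel-verified Lean document; each statement's English description precedes it below -/
import Mathlib

section
/- Every maximal set of diameter 1 in the plane has constant width 1: for every unit vector u, the width of S in direction u, namely sup_{p∈S} ⟨p,u⟩ − inf_{p∈S} ⟨p,u⟩, equals 1. -/
/-- An orbiform of unit diameter: a maximal set of diameter 1 in the plane. -/
def IsOrbiform (S : Set (EuclideanSpace ℝ (Fin 2))) : Prop :=
  Metric.diam S = 1 ∧
    ∀ T : Set (EuclideanSpace ℝ (Fin 2)), Metric.diam T = 1 → S ⊆ T → T = S

set_option maxHeartbeats 1000000 in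
theorem orbiform_constant_width (S : Set (EuclideanSpace ℝ (Fin 2)))
    (h : IsOrbiform S) (u : EuclideanSpace ℝ (Fin 2)) (hu : ‖u‖ = 1) :
    sSup ((fun p : EuclideanSpace ℝ (Fin 2) => (inner ℝ p u : ℝ)) '' S) -
      sInf ((fun p : EuclideanSpace ℝ (Fin 2) => (inner ℝ p u : ℝ)) '' S) = 1 := by
  classical
  obtain ⟨hdiam, hmax⟩ := h
  -- S is bounded
  have hbdd : Bornology.IsBounded S := by
    rw [Metric.isBounded_iff_ediam_ne_top]
    intro htop
    rw [Metric.diam, htop] at hdiam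
    simp at hdiam
  have hdist : ∀ {x y : EuclideanSpace ℝ (Fin 2)}, x ∈ S → y ∈ S → dist x y ≤ 1 := by
    intro x y hx hy
    have := Metric.dist_le_diam_of_mem hbdd hx hy
    rwa [hdiam] at this
  -- maximality characterization
  have hmem : ∀ x : EuclideanSpace ℝ (Fin 2), (∀ y ∈ S, dist x y ≤ 1) → x ∈ S := by
    intro x hx
    have hsub : S ⊆ S ∪ {x} := Set.subset_union_left
    have hd1 : Metric.diam (S ∪ {x}) ≤ 1 := by
      apply Metric.diam_le_of_forall_dist_le zero_le_one
      rintro a (ha | ha) b (hb | hb)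
      · exact hdist ha hb
      · rw [Set.mem_singleton_iff] at hb; subst hb; rw [dist_comm]; exact hx a ha
      · rw [Set.mem_singleton_iff] at ha; subst ha; exact hx b hb
      · rw [Set.mem_singleton_iff] at ha hb; subst ha; subst hb; simp
    have hbd : Bornology.IsBounded (S ∪ {x}) := hbdd.union Bornology.isBounded_singleton
    have hd2 : Metric.diam (S ∪ {x}) = 1 := by
      have h2 := Metric.diam_mono hsub hbd
      rw [hdiam] at h2
      linarith
    have := hmax _ hd2 hsub
    rw [← this]
    exact Or.inr rfl
  have hne : S.Nonempty := by
    rcases S.eq_empty_or_nonempty with hS | hS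
    · rw [hS, Metric.diam_empty] at hdiam; norm_num at hdiam
    · exact hS
  have hclosed : IsClosed S := by
    have hSeq : S = ⋂ y ∈ S, Metric.closedBall y 1 := by
      ext x
      simp only [Set.mem_iInter, Metric.mem_closedBall]
      exact ⟨fun hx y hy => hdist hx hy, hmem x⟩
    rw [hSeq]
    exact isClosed_biInter fun y _ => Metric.isClosed_closedBall
  have hcomp : IsCompact S := Metric.isCompact_of_isClosed_isBounded hclosed hbdd
  set f : EuclideanSpace ℝ (Fin 2) → ℝ := fun p => (inner ℝ p u : ℝ) with hf
  have hfc : Continuous f := Continuous.inner continuous_id continuous_const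
  obtain ⟨q, hqS, hqmax⟩ := hcomp.exists_isMaxOn hne hfc.continuousOn
  have hqmax' : ∀ y ∈ S, f y ≤ f q := isMaxOn_iff.mp hqmax
  -- coordinates
  have hinner : ∀ a b : EuclideanSpace ℝ (Fin 2), (inner ℝ a b : ℝ) = a 0 * b 0 + a 1 * b 1 := by
    intro a b
    simp [PiLp.inner_apply, Fin.sum_univ_two, RCLike.inner_apply, mul_comm]
  have huu : (inner ℝ u u : ℝ) = 1 := by
    rw [real_inner_self_eq_norm_mul_norm, hu]; norm_num
  have hu2 : u 0 * u 0 + u 1 * u 1 = 1 := by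
    have := hinner u u
    rw [huu] at this
    linarith
  obtain ⟨w, hw0, hw1⟩ : ∃ w : EuclideanSpace ℝ (Fin 2), w 0 = -(u 1) ∧ w 1 = u 0 :=
    ⟨!₂[-(u 1), u 0], rfl, rfl⟩
  have huw : (inner ℝ u w : ℝ) = 0 := by rw [hinner, hw0, hw1]; ring
  have hww : (inner ℝ w w : ℝ) = 1 := by rw [hinner, hw0, hw1]; nlinarith [hu2]
  have hwnorm : ‖w‖ = 1 := by
    have h2 := real_inner_self_eq_norm_mul_norm w
    rw [hww] at h2
    nlinarith [norm_nonneg w]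
  have hdecomp : ∀ v : EuclideanSpace ℝ (Fin 2),
      v = (inner ℝ v u : ℝ) • u + (inner ℝ v w : ℝ) • w := by
    intro v
    have hvu := hinner v u
    have hvw := hinner v w
    ext i
    fin_cases i
    · simp only [Fin.zero_eta, Fin.isValue, PiLp.add_apply, PiLp.smul_apply, smul_eq_mul,
        hvu, hvw, hw0, hw1]
      linear_combination (-(v 0)) * hu2
    · simp only [Fin.mk_one, Fin.isValue, PiLp.add_apply, PiLp.smul_apply, smul_eq_mul,
        hvu, hvw, hw0, hw1]
      linear_combination (-(v 1)) * hu2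
  -- key inequality from unit chords
  have hkey : ∀ v : EuclideanSpace ℝ (Fin 2), ‖v‖ = 1 → q - v ∈ S →
      ∀ y ∈ S, ‖q - y‖ ^ 2 ≤ 2 * (inner ℝ (q - y) v : ℝ) := by
    intro v hv hvS y hyS
    have h1 : dist (q - v) y ≤ 1 := hdist hvS hyS
    rw [dist_eq_norm] at h1
    have h2 : q - v - y = q - y - v := by abel
    rw [h2] at h1
    have h3 : ‖q - y - v‖ ^ 2 ≤ 1 := by nlinarith [norm_nonneg (q - y - v)]
    rw [norm_sub_sq_real, hv] at h3
    nlinarith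
  -- claim C : in each closed half-plane (w.r.t. a direction orthogonal to u)
  -- there is a unit chord emanating from q
  have claimC : ∀ w' : EuclideanSpace ℝ (Fin 2), ‖w'‖ = 1 → (inner ℝ u w' : ℝ) = 0 →
      ∃ v : EuclideanSpace ℝ (Fin 2), ‖v‖ = 1 ∧ q - v ∈ S ∧ 0 ≤ (inner ℝ v w' : ℝ) := by
    intro w' hw'n hw'o
    by_contra hcon
    push_neg at hcon
    set g : EuclideanSpace ℝ (Fin 2) → ℝ := fun y => (inner ℝ (q - y) w' : ℝ) with hg
    have hgc : Continuous g := Continuous.inner (continuous_const.sub continuous_id) continuous_const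
    have hnormc : Continuous fun y : EuclideanSpace ℝ (Fin 2) => ‖q - y‖ :=
      (continuous_const.sub continuous_id).norm
    -- helper to derive contradiction from a point strictly above q
    have hpush : ∀ ε ε' : ℝ, 0 < ε' →
        (∀ y ∈ S, dist (q + ε • w' + ε' • u) y ≤ 1) → False := by
      intro ε ε' hε' hall
      have hxS := hmem _ hall
      have h1 : f (q + ε • w' + ε' • u) ≤ f q := hqmax' _ hxS
      have e1 : (inner ℝ w' u : ℝ) = 0 := by rw [real_inner_comm]; exact hw'o
      have h2 : f (q + ε • w' + ε' • u) = f q + ε' := by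
        simp only [hf, inner_add_left, real_inner_smul_left, e1, huu]
        ring
      rw [h2] at h1
      linarith
    -- step 1
    have hstep1 : ∃ ρ : ℝ, 0 < ρ ∧ ∀ y ∈ S, 0 ≤ g y → ‖q - y‖ ≤ 1 - ρ := by
      set T : Set (EuclideanSpace ℝ (Fin 2)) := S ∩ {y | 0 ≤ g y} with hT
      have hTc : IsCompact T := hcomp.inter_right (isClosed_le continuous_const hgc)
      have hTlt : ∀ y ∈ T, ‖q - y‖ < 1 := by
        rintro y ⟨hyS, hy0⟩
        have hle : ‖q - y‖ ≤ 1 := by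
          have := hdist hqS hyS; rwa [dist_eq_norm] at this
        rcases lt_or_eq_of_le hle with hlt | heq
        · exact hlt
        · exfalso
          have hmemS : q - (q - y) ∈ S := by
            have : q - (q - y) = y := by abel
            rw [this]; exact hyS
          have := hcon (q - y) heq hmemS
          exact absurd this (not_lt.mpr hy0)
      rcases T.eq_empty_or_nonempty with hTe | hTne
      · refine ⟨1/2, by norm_num, fun y hy h0 => ?_⟩
        exact absurd (show y ∈ T from ⟨hy, h0⟩) (by rw [hTe]; simp)
      · obtain ⟨ym, hymT, hymmax⟩ := hTc.exists_isMaxOn hTne hnormc.continuousOn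
        refine ⟨1 - ‖q - ym‖, by linarith [hTlt ym hymT], ?_⟩
        intro y hyS h0
        have := isMaxOn_iff.mp hymmax y ⟨hyS, h0⟩
        linarith
    obtain ⟨ρ, hρpos, hρ⟩ := hstep1
    set T₂ : Set (EuclideanSpace ℝ (Fin 2)) := S ∩ {y | 1 - ρ/2 ≤ ‖q - y‖} with hT2
    have hT2c : IsCompact T₂ := hcomp.inter_right (isClosed_le continuous_const hnormc)
    rcases T₂.eq_empty_or_nonempty with hT2e | hT2ne
    · -- everything is strictly inside : push straight up
      apply hpush 0 (ρ/4) (by linarith)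
      intro y hyS
      have hlt : ‖q - y‖ < 1 - ρ/2 := by
        by_contra hge
        push_neg at hge
        exact absurd (show y ∈ T₂ from ⟨hyS, hge⟩) (by rw [hT2e]; simp)
      rw [dist_eq_norm]
      have hrw : q + (0:ℝ) • w' + (ρ/4) • u - y = (q - y) + (ρ/4) • u := by
        rw [zero_smul]; abel
      rw [hrw]
      have hn : ‖(ρ/4) • u‖ = ρ/4 := by
        rw [norm_smul, hu, mul_one, Real.norm_eq_abs, abs_of_nonneg (by linarith)]
      calc ‖(q - y) + (ρ/4) • u‖ ≤ ‖q - y‖ + ‖(ρ/4) • u‖ := norm_add_le _ _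
        _ ≤ 1 := by rw [hn]; linarith
    · -- there are deep points; they all slope away from w'
      obtain ⟨yd, hydT, hydmax⟩ := hT2c.exists_isMaxOn hT2ne hgc.continuousOn
      have hydS := hydT.1
      have hgyd : g yd < 0 := by
        by_contra hge
        push_neg at hge
        have h1 := hρ yd hydS hge
        have h2 := hydT.2
        simp only [Set.mem_setOf_eq] at h2
        linarith
      obtain ⟨δ, hδ⟩ : ∃ d : ℝ, d = -(g yd) := ⟨_, rfl⟩
      have hδpos : 0 < δ := by simp only [hδ]; linarith
      have hδle : δ ≤ 1 := by
        have h1 := real_inner_le_norm (yd - q) w'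
        have h2 : yd - q = -(q - yd) := by abel
        rw [h2, inner_neg_left, norm_neg, hw'n, mul_one] at h1
        have h3 : ‖q - yd‖ ≤ 1 := by
          have := hdist hqS hydS; rwa [dist_eq_norm] at this
        simp only [hδ, hg]
        linarith
      obtain ⟨ε, hε⟩ : ∃ e : ℝ, e = min (ρ/4) (δ/4) := ⟨_, rfl⟩
      have hεpos : 0 < ε := by rw [hε]; exact lt_min (by linarith) (by linarith)
      have hερ : ε ≤ ρ/4 := by rw [hε]; exact min_le_left _ _
      have hεδ : ε ≤ δ/4 := by rw [hε]; exact min_le_right _ _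
      obtain ⟨ε', hε'⟩ : ∃ e : ℝ, e = ε * δ / 4 := ⟨_, rfl⟩
      have hε'pos : 0 < ε' := by rw [hε']; positivity
      have hε'le : ε' ≤ ε/4 := by
        rw [hε']
        nlinarith
      apply hpush ε ε' hε'pos
      intro y hyS
      have hqy1 : ‖q - y‖ ≤ 1 := by
        have := hdist hqS hyS; rwa [dist_eq_norm] at this
      rw [dist_eq_norm]
      have hrw : q + ε • w' + ε' • u - y = (q - y) + (ε • w' + ε' • u) := by abel
      rw [hrw]
      rcases le_or_gt (‖q - y‖) (1 - ρ/2) with hc1 | hc2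
      · have hn1 : ‖ε • w'‖ = ε := by
          rw [norm_smul, hw'n, mul_one, Real.norm_eq_abs, abs_of_nonneg hεpos.le]
        have hn2 : ‖ε' • u‖ = ε' := by
          rw [norm_smul, hu, mul_one, Real.norm_eq_abs, abs_of_nonneg hε'pos.le]
        calc ‖(q - y) + (ε • w' + ε' • u)‖ ≤ ‖q - y‖ + ‖ε • w' + ε' • u‖ := norm_add_le _ _
          _ ≤ ‖q - y‖ + (‖ε • w'‖ + ‖ε' • u‖) := by linarith [norm_add_le (ε • w') (ε' • u)]
          _ ≤ 1 := by rw [hn1, hn2]; linarith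
      · have hyT2 : y ∈ T₂ := ⟨hyS, le_of_lt hc2⟩
        have hgy : g y ≤ -δ := by
          have := isMaxOn_iff.mp hydmax y hyT2
          simp only [hδ]
          linarith
        have e1 : (inner ℝ w' u : ℝ) = 0 := by rw [real_inner_comm]; exact hw'o
        have horth : ‖ε • w' + ε' • u‖ ^ 2 = ε^2 + ε'^2 := by
          rw [norm_add_sq_real, real_inner_smul_left, real_inner_smul_right, e1,
            norm_smul, norm_smul, hu, hw'n, Real.norm_eq_abs, Real.norm_eq_abs]
          rw [abs_of_nonneg hεpos.le, abs_of_nonneg hε'pos.le]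
          ring
        have hcross : (inner ℝ (q - y) (ε • w' + ε' • u) : ℝ)
            = ε * g y + ε' * (inner ℝ (q - y) u : ℝ) := by
          rw [inner_add_right, real_inner_smul_right, real_inner_smul_right]
        have hiu : (inner ℝ (q - y) u : ℝ) ≤ 1 := by
          have h1 := real_inner_le_norm (q - y) u
          rw [hu, mul_one] at h1
          linarith
        have hsq : ‖(q - y) + (ε • w' + ε' • u)‖ ^ 2 ≤ 1 := by
          rw [norm_add_sq_real, hcross, horth]
          have e2 : ‖q - y‖ ^ 2 ≤ 1 := pow_le_one₀ (norm_nonneg _) hqy1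
          have f1 : ε * g y ≤ -(ε * δ) := by
            have h1 := mul_le_mul_of_nonneg_left hgy hεpos.le
            nlinarith [h1]
          have f2 : ε' * (inner ℝ (q - y) u : ℝ) ≤ ε' := by
            have h1 := mul_le_mul_of_nonneg_left hiu hε'pos.le
            linarith
          have f3 : ε ^ 2 ≤ ε * δ / 4 := by
            have h1 := mul_le_mul_of_nonneg_left hεδ hεpos.le
            nlinarith [h1]
          have f4 : ε' ^ 2 ≤ ε * δ / 4 := by
            have h1 : ε' * ε' ≤ (ε/4) * (ε/4) :=
              mul_le_mul hε'le hε'le hε'pos.le (by linarith)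
            have h2 : 0 ≤ ε * δ := (mul_pos hεpos hδpos).le
            nlinarith [h1, f3]
          have f6 : 0 ≤ ε * δ := (mul_pos hεpos hδpos).le
          linarith [e2, f1, f2, f3, f4, f6, hε']
        nlinarith [norm_nonneg ((q - y) + (ε • w' + ε' • u))]
  -- apply claim C in both half-planes
  obtain ⟨v₂, hv₂n, hv₂S, hv₂w⟩ := claimC w hwnorm huw
  have hnegwn : ‖-w‖ = 1 := by rw [norm_neg]; exact hwnorm
  have hunegw : (inner ℝ u (-w) : ℝ) = 0 := by rw [inner_neg_right, huw]; ring
  obtain ⟨v₁, hv₁n, hv₁S, hv₁w'⟩ := claimC (-w) hnegwn hunegw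
  have hv₁w : (inner ℝ v₁ w : ℝ) ≤ 0 := by
    rw [inner_neg_right] at hv₁w'
    linarith
  have hc₁ : 0 ≤ (inner ℝ v₁ u : ℝ) := by
    have h1 := hqmax' _ hv₁S
    simp only [hf, inner_sub_left] at h1
    linarith
  have hc₂ : 0 ≤ (inner ℝ v₂ u : ℝ) := by
    have h1 := hqmax' _ hv₂S
    simp only [hf, inner_sub_left] at h1
    linarith
  -- main claim: q - u ∈ S
  have hqu : q - u ∈ S := by
    by_cases ht₁ : (inner ℝ v₁ w : ℝ) = 0
    · -- v₁ = u
      have hd := hdecomp v₁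
      rw [ht₁, zero_smul, add_zero] at hd
      have hnv : ‖v₁‖ = |(inner ℝ v₁ u : ℝ)| := by
        conv_lhs => rw [hd]
        rw [norm_smul, hu, mul_one, Real.norm_eq_abs]
      rw [hv₁n, abs_of_nonneg hc₁] at hnv
      have : v₁ = u := by rw [hd, ← hnv, one_smul]
      rwa [this] at hv₁S
    by_cases ht₂ : (inner ℝ v₂ w : ℝ) = 0
    · have hd := hdecomp v₂
      rw [ht₂, zero_smul, add_zero] at hd
      have hnv : ‖v₂‖ = |(inner ℝ v₂ u : ℝ)| := by
        conv_lhs => rw [hd]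
        rw [norm_smul, hu, mul_one, Real.norm_eq_abs]
      rw [hv₂n, abs_of_nonneg hc₂] at hnv
      have : v₂ = u := by rw [hd, ← hnv, one_smul]
      rwa [this] at hv₂S
    have ht₁' : (inner ℝ v₁ w : ℝ) < 0 := lt_of_le_of_ne hv₁w ht₁
    have ht₂' : 0 < (inner ℝ v₂ w : ℝ) := lt_of_le_of_ne hv₂w (Ne.symm ht₂)
    by_cases hcc : (inner ℝ v₁ u : ℝ) = 0 ∧ (inner ℝ v₂ u : ℝ) = 0
    · exfalso
      obtain ⟨hcc₁, hcc₂⟩ := hcc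
      have hd₁ := hdecomp v₁
      rw [hcc₁, zero_smul, zero_add] at hd₁
      have hd₂ := hdecomp v₂
      rw [hcc₂, zero_smul, zero_add] at hd₂
      have habs₁ : ‖v₁‖ = |(inner ℝ v₁ w : ℝ)| := by
        conv_lhs => rw [hd₁]
        rw [norm_smul, hwnorm, mul_one, Real.norm_eq_abs]
      rw [hv₁n, abs_of_neg ht₁'] at habs₁
      have ht₁v : (inner ℝ v₁ w : ℝ) = -1 := by linarith
      have habs₂ : ‖v₂‖ = |(inner ℝ v₂ w : ℝ)| := by
        conv_lhs => rw [hd₂]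
        rw [norm_smul, hwnorm, mul_one, Real.norm_eq_abs]
      rw [hv₂n, abs_of_pos ht₂'] at habs₂
      have hdd := hdist hv₁S hv₂S
      rw [dist_eq_norm] at hdd
      have hrw : q - v₁ - (q - v₂) = v₂ - v₁ := by abel
      rw [hrw, hd₁, hd₂, ht₁v, ← habs₂] at hdd
      have h2w : (1:ℝ) • w - (-1:ℝ) • w = (2:ℝ) • w := by module
      rw [h2w, norm_smul, hwnorm] at hdd
      norm_num at hdd
    · -- generic case : u is a nonnegative combination of v₁ and v₂
      have hD : 0 < (inner ℝ v₁ u : ℝ) * (inner ℝ v₂ w : ℝ)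
          + (-(inner ℝ v₁ w : ℝ)) * (inner ℝ v₂ u : ℝ) := by
        rcases eq_or_lt_of_le hc₁ with h0 | hpos
        · have hc₂pos : 0 < (inner ℝ v₂ u : ℝ) := by
            rcases eq_or_lt_of_le hc₂ with h0' | h0'
            · exact absurd ⟨h0.symm, h0'.symm⟩ hcc
            · exact h0'
          nlinarith
        · nlinarith
      set D : ℝ := (inner ℝ v₁ u : ℝ) * (inner ℝ v₂ w : ℝ)
          + (-(inner ℝ v₁ w : ℝ)) * (inner ℝ v₂ u : ℝ) with hDdef
      set α : ℝ := (inner ℝ v₂ w : ℝ) / D with hα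
      set β : ℝ := (-(inner ℝ v₁ w : ℝ)) / D with hβ
      have hαpos : 0 ≤ α := div_nonneg ht₂'.le hD.le
      have hβpos : 0 ≤ β := div_nonneg (by linarith) hD.le
      have hcomb : α • v₁ + β • v₂ = u := by
        have hDne : D ≠ 0 := ne_of_gt hD
        have h1 : α * (inner ℝ v₁ u : ℝ) + β * (inner ℝ v₂ u : ℝ) = 1 := by
          rw [hα, hβ, div_mul_eq_mul_div, div_mul_eq_mul_div, ← add_div,
            div_eq_one_iff_eq hDne, hDdef]
          ring
        have h2 : α * (inner ℝ v₁ w : ℝ) + β * (inner ℝ v₂ w : ℝ) = 0 := by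
          rw [hα, hβ, div_mul_eq_mul_div, div_mul_eq_mul_div, ← add_div,
            div_eq_zero_iff]
          left
          ring
        calc α • v₁ + β • v₂
            = α • ((inner ℝ v₁ u : ℝ) • u + (inner ℝ v₁ w : ℝ) • w)
              + β • ((inner ℝ v₂ u : ℝ) • u + (inner ℝ v₂ w : ℝ) • w) := by
              rw [← hdecomp v₁, ← hdecomp v₂]
          _ = (α * (inner ℝ v₁ u : ℝ) + β * (inner ℝ v₂ u : ℝ)) • u
              + (α * (inner ℝ v₁ w : ℝ) + β * (inner ℝ v₂ w : ℝ)) • w := by module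
          _ = u := by rw [h1, h2]; simp
      have hαβ : 1 ≤ α + β := by
        have h1 : ‖α • v₁ + β • v₂‖ ≤ α + β := by
          calc ‖α • v₁ + β • v₂‖ ≤ ‖α • v₁‖ + ‖β • v₂‖ := norm_add_le _ _
            _ = α + β := by
                rw [norm_smul, norm_smul, hv₁n, hv₂n, Real.norm_eq_abs, Real.norm_eq_abs,
                  abs_of_nonneg hαpos, abs_of_nonneg hβpos]
                ring
        rw [hcomb, hu] at h1
        exact h1
      apply hmem
      intro y hyS
      have hk₁ := hkey v₁ hv₁n hv₁S y hyS
      have hk₂ := hkey v₂ hv₂n hv₂S y hyS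
      have hiu : (inner ℝ (q - y) u : ℝ)
          = α * (inner ℝ (q - y) v₁ : ℝ) + β * (inner ℝ (q - y) v₂ : ℝ) := by
        rw [← hcomb, inner_add_right, real_inner_smul_right, real_inner_smul_right]
      rw [dist_eq_norm]
      have hrw : q - u - y = q - y - u := by abel
      rw [hrw]
      have hsq : ‖q - y - u‖ ^ 2 ≤ 1 := by
        rw [norm_sub_sq_real, hu, hiu]
        nlinarith [sq_nonneg ‖q - y‖,
          mul_le_mul_of_nonneg_left hk₁ hαpos,
          mul_le_mul_of_nonneg_left hk₂ hβpos,
          mul_le_mul_of_nonneg_right hαβ (sq_nonneg ‖q - y‖)]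
      nlinarith [norm_nonneg (q - y - u)]
  -- conclusion
  have hSup : sSup (f '' S) = f q := by
    apply IsGreatest.csSup_eq
    exact ⟨⟨q, hqS, rfl⟩, by rintro z ⟨y, hyS, rfl⟩; exact hqmax' y hyS⟩
  have hfqu : f (q - u) = f q - 1 := by
    simp only [hf, inner_sub_left, huu]
  have hInf : sInf (f '' S) = f q - 1 := by
    apply IsLeast.csInf_eq
    constructor
    · exact ⟨q - u, hqu, hfqu⟩
    · rintro z ⟨y, hyS, rfl⟩
      have h2 := real_inner_le_norm (q - y) u
      rw [hu, mul_one] at h2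
      have h3 : ‖q - y‖ ≤ 1 := by
        have := hdist hqS hyS; rwa [dist_eq_norm] at this
      have h4 : (inner ℝ (q - y) u : ℝ) = f q - f y := by
        simp only [hf, inner_sub_left]
      rw [h4] at h2
      linarith
  rw [hSup, hInf]
  ring
end

section
/- The regular hexagon with distance 1 between opposite sides has area √3/2, and Pál's truncated hexagon (the hexagon with two opposite corners cut off along edges of the inscribed regular dodecagon of width 1) has area 2 − 2/√3. -/
open Metric MeasureTheory Real

noncomputable section

/-- A point of the Euclidean plane with given coordinates. -/
def pt (x y : ℝ) : EuclideanSpace ℝ (Fin 2) :=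
  (WithLp.equiv 2 (Fin 2 → ℝ)).symm ![x, y]

/-- Regular hexagon of width 1 (distance 1 between opposite sides), centered at the
origin, with a vertex at the top: the convex hull of its six vertices, which lie at
distance `1/√3` from the center at angles `π/2 - k·π/3`. -/
def hexagon : Set (EuclideanSpace ℝ (Fin 2)) :=
  convexHull ℝ (Set.range fun k : Fin 6 =>
    pt (Real.cos (π / 2 - k * (π / 3)) / Real.sqrt 3)
       (Real.sin (π / 2 - k * (π / 3)) / Real.sqrt 3))

/-- Pál's covering: the width-1 hexagon with the two corners at angles `-π/6` and
`-5π/6` cut off along two sides of the inscribed regular dodecagon of width 1,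
i.e. along lines at distance `1/2` from the center perpendicular to those corner
directions. -/
def palCover : Set (EuclideanSpace ℝ (Fin 2)) :=
  hexagon ∩
    {p | (inner ℝ p (pt (Real.cos (-(π / 6))) (Real.sin (-(π / 6)))) : ℝ) ≤ 1 / 2} ∩
    {p | (inner ℝ p (pt (Real.cos (-(5 * π / 6))) (Real.sin (-(5 * π / 6)))) : ℝ) ≤ 1 / 2}

/-! ### Auxiliary facts about `√3` -/

lemma sqrt3_pos : (0:ℝ) < Real.sqrt 3 := by positivity
lemma sqrt3_ne : Real.sqrt 3 ≠ 0 := ne_of_gt sqrt3_pos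
lemma sqrt3_sq : Real.sqrt 3 * Real.sqrt 3 = 3 := Real.mul_self_sqrt (by norm_num)
lemma sqrt3_lt_two : Real.sqrt 3 < 2 := by nlinarith [sqrt3_sq, sqrt3_pos]
lemma one_lt_sqrt3 : 1 < Real.sqrt 3 := by nlinarith [sqrt3_sq, sqrt3_pos]
lemma hdiv (z : ℝ) : z/Real.sqrt 3 = z * Real.sqrt 3 / 3 := by
  rw [div_eq_div_iff (ne_of_gt sqrt3_pos) (by norm_num : (3:ℝ) ≠ 0)]
  linear_combination (-z) * sqrt3_sq
lemma half_div : Real.sqrt 3 / 2 / Real.sqrt 3 = 1/2 := by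
  rw [div_eq_iff sqrt3_ne]; ring
lemma hval1 : Real.sqrt 3 * (1 / Real.sqrt 3) = 1 := by field_simp
lemma hval2 : Real.sqrt 3 * (1 / (2 * Real.sqrt 3)) = 1/2 := by
  rw [mul_one_div, div_eq_iff (by positivity : (2:ℝ) * Real.sqrt 3 ≠ 0)]; ring

/-! ### Basic coordinate lemmas for `pt` -/

lemma pt_apply0 (x y : ℝ) : pt x y 0 = x := rfl
lemma pt_apply1 (x y : ℝ) : pt x y 1 = y := rfl
lemma pt_eta (p : EuclideanSpace ℝ (Fin 2)) : pt (p 0) (p 1) = p := by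
  ext i; fin_cases i <;> rfl
lemma pt_add (x y x' y' : ℝ) : pt x y + pt x' y' = pt (x + x') (y + y') := by
  ext i; fin_cases i <;> rfl
lemma pt_smul (c x y : ℝ) : c • pt x y = pt (c * x) (c * y) := by
  ext i; fin_cases i <;> rfl
lemma pt_congr {a b c d : ℝ} (h1 : a = c) (h2 : b = d) : pt a b = pt c d := by rw [h1, h2]
lemma inner_pt (p : EuclideanSpace ℝ (Fin 2)) (a b : ℝ) :
    (inner ℝ p (pt a b) : ℝ) = p 0 * a + p 1 * b := by
  simp [PiLp.inner_apply, Fin.sum_univ_two, pt_apply0, pt_apply1]; ring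

/-! ### The six vertices of the hexagon -/

def V : Fin 6 → EuclideanSpace ℝ (Fin 2) := fun k =>
    pt (Real.cos (π / 2 - k * (π / 3)) / Real.sqrt 3)
       (Real.sin (π / 2 - k * (π / 3)) / Real.sqrt 3)

def R : Set (EuclideanSpace ℝ (Fin 2)) := Set.range V

lemma hexagon_def : hexagon = convexHull ℝ R := rfl

lemma sin_two_pi_div_three : Real.sin (2*(π/3)) = Real.sqrt 3 / 2 := by
  rw [show 2*(π/3) = π - π/3 by ring, Real.sin_pi_sub, Real.sin_pi_div_three]
lemma cos_two_pi_div_three : Real.cos (2*(π/3)) = -(1/2) := by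
  rw [show 2*(π/3) = π - π/3 by ring, Real.cos_pi_sub, Real.cos_pi_div_three]
lemma sin_pi' : Real.sin (3*(π/3)) = 0 := by rw [show 3*(π/3) = π by ring, Real.sin_pi]
lemma cos_pi' : Real.cos (3*(π/3)) = -1 := by rw [show 3*(π/3) = π by ring, Real.cos_pi]
lemma sin_four_pi_div_three : Real.sin (4*(π/3)) = -(Real.sqrt 3 / 2) := by
  rw [show 4*(π/3) = π/3 + π by ring, Real.sin_add_pi, Real.sin_pi_div_three]
lemma cos_four_pi_div_three : Real.cos (4*(π/3)) = -(1/2) := by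
  rw [show 4*(π/3) = π/3 + π by ring, Real.cos_add_pi, Real.cos_pi_div_three]
lemma sin_five_pi_div_three : Real.sin (5*(π/3)) = -(Real.sqrt 3 / 2) := by
  rw [show 5*(π/3) = 2*π - π/3 by ring, Real.sin_two_pi_sub, Real.sin_pi_div_three]
lemma cos_five_pi_div_three : Real.cos (5*(π/3)) = 1/2 := by
  rw [show 5*(π/3) = 2*π - π/3 by ring, Real.cos_two_pi_sub, Real.cos_pi_div_three]

lemma ang0 (h : 0 < 6) : π / 2 - ((⟨0,h⟩ : Fin 6) : ℝ) * (π / 3) = π/2 - 0*(π/3) := by norm_num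
lemma ang1 (h : 1 < 6) : π / 2 - ((⟨1,h⟩ : Fin 6) : ℝ) * (π / 3) = π/2 - 1*(π/3) := by norm_num
lemma ang2 (h : 2 < 6) : π / 2 - ((⟨2,h⟩ : Fin 6) : ℝ) * (π / 3) = π/2 - 2*(π/3) := by norm_num
lemma ang3 (h : 3 < 6) : π / 2 - ((⟨3,h⟩ : Fin 6) : ℝ) * (π / 3) = π/2 - 3*(π/3) := by norm_num
lemma ang4 (h : 4 < 6) : π / 2 - ((⟨4,h⟩ : Fin 6) : ℝ) * (π / 3) = π/2 - 4*(π/3) := by norm_num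
lemma ang5 (h : 5 < 6) : π / 2 - ((⟨5,h⟩ : Fin 6) : ℝ) * (π / 3) = π/2 - 5*(π/3) := by norm_num

lemma eq0 (h : 0 < 6) : V ⟨0, h⟩ = pt 0 (1 / Real.sqrt 3) :=
  pt_congr (by rw [ang0]; norm_num) (by rw [ang0]; norm_num)
lemma eq1 (h : 1 < 6) : V ⟨1, h⟩ = pt (1/2) (1 / (2 * Real.sqrt 3)) :=
  pt_congr
    (by rw [ang1, one_mul, Real.cos_pi_div_two_sub, Real.sin_pi_div_three, half_div])
    (by rw [ang1, one_mul, Real.sin_pi_div_two_sub, Real.cos_pi_div_three]; ring)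
lemma eq2 (h : 2 < 6) : V ⟨2, h⟩ = pt (1/2) (-(1 / (2 * Real.sqrt 3))) :=
  pt_congr
    (by rw [ang2, Real.cos_pi_div_two_sub, sin_two_pi_div_three, half_div])
    (by rw [ang2, Real.sin_pi_div_two_sub, cos_two_pi_div_three]; ring)
lemma eq3 (h : 3 < 6) : V ⟨3, h⟩ = pt 0 (-(1 / Real.sqrt 3)) :=
  pt_congr
    (by rw [ang3, Real.cos_pi_div_two_sub, sin_pi']; norm_num)
    (by rw [ang3, Real.sin_pi_div_two_sub, cos_pi']; ring)
lemma eq4 (h : 4 < 6) : V ⟨4, h⟩ = pt (-(1/2)) (-(1 / (2 * Real.sqrt 3))) :=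
  pt_congr
    (by rw [ang4, Real.cos_pi_div_two_sub, sin_four_pi_div_three, neg_div, half_div])
    (by rw [ang4, Real.sin_pi_div_two_sub, cos_four_pi_div_three]; ring)
lemma eq5 (h : 5 < 6) : V ⟨5, h⟩ = pt (-(1/2)) (1 / (2 * Real.sqrt 3)) :=
  pt_congr
    (by rw [ang5, Real.cos_pi_div_two_sub, sin_five_pi_div_three, neg_div, half_div])
    (by rw [ang5, Real.sin_pi_div_two_sub, cos_five_pi_div_three]; ring)

lemma mem0 : pt 0 (1 / Real.sqrt 3) ∈ R := ⟨⟨0, by norm_num⟩, eq0 _⟩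
lemma mem1 : pt (1/2) (1 / (2 * Real.sqrt 3)) ∈ R := ⟨⟨1, by norm_num⟩, eq1 _⟩
lemma mem2 : pt (1/2) (-(1 / (2 * Real.sqrt 3))) ∈ R := ⟨⟨2, by norm_num⟩, eq2 _⟩
lemma mem3 : pt 0 (-(1 / Real.sqrt 3)) ∈ R := ⟨⟨3, by norm_num⟩, eq3 _⟩
lemma mem4 : pt (-(1/2)) (-(1 / (2 * Real.sqrt 3))) ∈ R := ⟨⟨4, by norm_num⟩, eq4 _⟩
lemma mem5 : pt (-(1/2)) (1 / (2 * Real.sqrt 3)) ∈ R := ⟨⟨5, by norm_num⟩, eq5 _⟩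

/-! ### Description of the hexagon by inequalities -/

def S : Set (EuclideanSpace ℝ (Fin 2)) :=
  {p | |p 0| ≤ 1/2 ∧ Real.sqrt 3 * |p 1| ≤ 1 - |p 0|}

lemma convex_S : Convex ℝ S := by
  intro p hp q hq a b ha hb hab
  have h0 : (a • p + b • q) 0 = a * p 0 + b * q 0 := by
    simp [PiLp.add_apply, PiLp.smul_apply, smul_eq_mul]
  have h1 : (a • p + b • q) 1 = a * p 1 + b * q 1 := by
    simp [PiLp.add_apply, PiLp.smul_apply, smul_eq_mul]
  have e0 : |a * p 0 + b * q 0| ≤ a * |p 0| + b * |q 0| := by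
    calc |a * p 0 + b * q 0| ≤ |a * p 0| + |b * q 0| := abs_add_le _ _
    _ = a * |p 0| + b * |q 0| := by rw [abs_mul, abs_mul, abs_of_nonneg ha, abs_of_nonneg hb]
  have e1 : |a * p 1 + b * q 1| ≤ a * |p 1| + b * |q 1| := by
    calc |a * p 1 + b * q 1| ≤ |a * p 1| + |b * q 1| := abs_add_le _ _
    _ = a * |p 1| + b * |q 1| := by rw [abs_mul, abs_mul, abs_of_nonneg ha, abs_of_nonneg hb]
  obtain ⟨hp1, hp2⟩ := hp
  obtain ⟨hq1, hq2⟩ := hq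
  constructor
  · rw [h0]; nlinarith
  · rw [h0, h1]
    have := mul_le_mul_of_nonneg_left e1 (le_of_lt sqrt3_pos)
    nlinarith [mul_le_mul_of_nonneg_left hp2 ha, mul_le_mul_of_nonneg_left hq2 hb]

lemma R_subset_S : R ⊆ S := by
  have h3 : (0:ℝ) ≤ 1 / Real.sqrt 3 := by positivity
  have h23 : (0:ℝ) ≤ 1 / (2 * Real.sqrt 3) := by positivity
  rintro _ ⟨k, rfl⟩
  fin_cases k <;>
    simp only [S, Set.mem_setOf_eq, eq0, eq1, eq2, eq3, eq4, eq5,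
      pt_apply0, pt_apply1, abs_neg, abs_of_nonneg h3, abs_of_nonneg h23,
      hval1, hval2] <;>
    norm_num [abs_of_nonneg]

lemma hull_subset_S : convexHull ℝ R ⊆ S := convexHull_min R_subset_S convex_S

lemma right_half {x y : ℝ} (hx0 : 0 ≤ x) (hx : x ≤ 1/2) (hy : Real.sqrt 3 * |y| ≤ 1 - x) :
    pt x y ∈ convexHull ℝ R := by
  have hx1' : (0:ℝ) < 1 - x := by linarith
  have hx1 : (1:ℝ) - x ≠ 0 := ne_of_gt hx1'
  set u : ℝ := Real.sqrt 3 * y / (1 - x) with hu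
  have hu1 : |u| ≤ 1 := by
    rw [hu, abs_div, abs_mul, abs_of_nonneg (le_of_lt sqrt3_pos), abs_of_pos hx1',
      div_le_one hx1']
    exact hy
  set s : ℝ := (1 + u)/2 with hs
  have hs0 : 0 ≤ s := by rw [hs]; have := neg_le_of_abs_le hu1; linarith
  have hs1 : 1 - s ≥ 0 := by rw [hs]; have := le_of_abs_le hu1; linarith
  set t : ℝ := 2 * x with ht
  have ht0 : 0 ≤ t := by positivity
  have ht1 : 1 - t ≥ 0 := by rw [ht]; linarith
  have hA : s • pt 0 (1 / Real.sqrt 3) + (1 - s) • pt 0 (-(1 / Real.sqrt 3)) ∈ convexHull ℝ R :=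
    (convex_convexHull ℝ R) (subset_convexHull ℝ R mem0) (subset_convexHull ℝ R mem3)
      hs0 hs1 (by ring)
  have hB : s • pt (1/2) (1 / (2 * Real.sqrt 3)) + (1 - s) • pt (1/2) (-(1 / (2 * Real.sqrt 3)))
      ∈ convexHull ℝ R :=
    (convex_convexHull ℝ R) (subset_convexHull ℝ R mem1) (subset_convexHull ℝ R mem2)
      hs0 hs1 (by ring)
  have hP := (convex_convexHull ℝ R) hA hB ht1 ht0 (by ring)
  have : pt x y = (1 - t) • (s • pt 0 (1 / Real.sqrt 3) + (1 - s) • pt 0 (-(1 / Real.sqrt 3)))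
      + t • (s • pt (1/2) (1 / (2 * Real.sqrt 3)) + (1 - s) • pt (1/2) (-(1 / (2 * Real.sqrt 3)))) := by
    simp only [pt_smul, pt_add]
    apply pt_congr
    · rw [hs, ht]; ring
    · rw [hs, ht, hu]
      field_simp
      ring_nf
  rw [this]; exact hP

lemma left_half {x y : ℝ} (hx0 : x ≤ 0) (hx : -(1/2) ≤ x) (hy : Real.sqrt 3 * |y| ≤ 1 + x) :
    pt x y ∈ convexHull ℝ R := by
  have hx1' : (0:ℝ) < 1 + x := by linarith
  have hx1 : (1:ℝ) + x ≠ 0 := ne_of_gt hx1'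
  set u : ℝ := Real.sqrt 3 * y / (1 + x) with hu
  have hu1 : |u| ≤ 1 := by
    rw [hu, abs_div, abs_mul, abs_of_nonneg (le_of_lt sqrt3_pos), abs_of_pos hx1',
      div_le_one hx1']
    exact hy
  set s : ℝ := (1 + u)/2 with hs
  have hs0 : 0 ≤ s := by rw [hs]; have := neg_le_of_abs_le hu1; linarith
  have hs1 : 1 - s ≥ 0 := by rw [hs]; have := le_of_abs_le hu1; linarith
  set t : ℝ := -(2 * x) with ht
  have ht0 : 0 ≤ t := by rw [ht]; linarith
  have ht1 : 1 - t ≥ 0 := by rw [ht]; linarith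
  have hA : s • pt 0 (1 / Real.sqrt 3) + (1 - s) • pt 0 (-(1 / Real.sqrt 3)) ∈ convexHull ℝ R :=
    (convex_convexHull ℝ R) (subset_convexHull ℝ R mem0) (subset_convexHull ℝ R mem3)
      hs0 hs1 (by ring)
  have hB : s • pt (-(1/2)) (1 / (2 * Real.sqrt 3)) + (1 - s) • pt (-(1/2)) (-(1 / (2 * Real.sqrt 3)))
      ∈ convexHull ℝ R :=
    (convex_convexHull ℝ R) (subset_convexHull ℝ R mem5) (subset_convexHull ℝ R mem4)
      hs0 hs1 (by ring)
  have hP := (convex_convexHull ℝ R) hA hB ht1 ht0 (by ring)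
  have : pt x y = (1 - t) • (s • pt 0 (1 / Real.sqrt 3) + (1 - s) • pt 0 (-(1 / Real.sqrt 3)))
      + t • (s • pt (-(1/2)) (1 / (2 * Real.sqrt 3)) + (1 - s) • pt (-(1/2)) (-(1 / (2 * Real.sqrt 3)))) := by
    simp only [pt_smul, pt_add]
    apply pt_congr
    · rw [hs, ht]; ring
    · rw [hs, ht, hu]
      field_simp
      ring_nf
  rw [this]; exact hP

lemma S_subset_hull : S ⊆ convexHull ℝ R := by
  intro p hp
  obtain ⟨h1, h2⟩ := hp
  rw [← pt_eta p]
  rcases le_or_gt 0 (p 0) with h | h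
  · exact right_half h (le_of_abs_le h1) (by rwa [abs_of_nonneg h] at h2)
  · apply left_half (le_of_lt h) (neg_le_of_abs_le h1)
    rwa [abs_of_neg h, sub_neg_eq_add] at h2

lemma hexagon_eq_S : hexagon = S :=
  le_antisymm hull_subset_S S_subset_hull

/-! ### Transfer to `ℝ × ℝ` -/

def F : EuclideanSpace ℝ (Fin 2) ≃ᵐ ℝ × ℝ :=
  (MeasurableEquiv.toLp 2 (Fin 2 → ℝ)).symm.trans (MeasurableEquiv.finTwoArrow)
lemma hF : MeasurePreserving F :=
  (volume_preserving_finTwoArrow ℝ).comp (EuclideanSpace.volume_preserving_symm_measurableEquiv_toLp (Fin 2))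
lemma F_apply (p : EuclideanSpace ℝ (Fin 2)) : F p = (p 0, p 1) := rfl

def S2 : Set (ℝ × ℝ) := {q | |q.1| ≤ 1/2 ∧ Real.sqrt 3 * |q.2| ≤ 1 - |q.1|}
lemma hS2 : MeasurableSet S2 := by
  apply MeasurableSet.inter
  · exact measurableSet_le (continuous_abs.comp continuous_fst).measurable measurable_const
  · exact measurableSet_le
      (measurable_const.mul (continuous_abs.comp continuous_snd).measurable)
      ((measurable_const.sub (continuous_abs.comp continuous_fst).measurable))

lemma S_preimage : S = F ⁻¹' S2 := rfl

def P2 : Set (ℝ × ℝ) := {q | (|q.1| ≤ 1/2 ∧ Real.sqrt 3 * |q.2| ≤ 1 - |q.1|) ∧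
  Real.sqrt 3 * q.1 - q.2 ≤ 1 ∧ -(Real.sqrt 3 * q.1) - q.2 ≤ 1}

lemma hP2 : MeasurableSet P2 := by
  refine hS2.inter (MeasurableSet.inter ?_ ?_)
  · exact measurableSet_le ((measurable_const.mul measurable_fst).sub measurable_snd)
      measurable_const
  · exact measurableSet_le (((measurable_const.mul measurable_fst).neg).sub measurable_snd)
      measurable_const

lemma palCover_eq : palCover = F ⁻¹' P2 := by
  have hc6 : Real.cos (-(π/6)) = Real.sqrt 3 / 2 := by
    rw [Real.cos_neg, Real.cos_pi_div_six]
  have hs6 : Real.sin (-(π/6)) = -(1/2) := by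
    rw [Real.sin_neg, Real.sin_pi_div_six]
  have hc56 : Real.cos (-(5 * π / 6)) = -(Real.sqrt 3 / 2) := by
    rw [Real.cos_neg, show 5 * π / 6 = π - π/6 by ring, Real.cos_pi_sub, Real.cos_pi_div_six]
  have hs56 : Real.sin (-(5 * π / 6)) = -(1/2) := by
    rw [Real.sin_neg, show 5 * π / 6 = π - π/6 by ring, Real.sin_pi_sub, Real.sin_pi_div_six]
  ext p
  simp only [palCover, Set.mem_inter_iff, Set.mem_setOf_eq, hexagon_eq_S, inner_pt,
    hc6, hs6, hc56, hs56, Set.mem_preimage, F_apply, P2, S]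
  constructor
  · rintro ⟨⟨hS, h1⟩, h2⟩
    exact ⟨hS, by linarith, by linarith⟩
  · rintro ⟨hS, h1, h2⟩
    exact ⟨⟨hS, by linarith⟩, by linarith⟩

/-! ### Volume computations in `ℝ × ℝ` -/

lemma slice_S2 (x : ℝ) : (Prod.mk x ⁻¹' S2) =
    if |x| ≤ 1/2 then Set.Icc (-((1 - |x|)/Real.sqrt 3)) ((1 - |x|)/Real.sqrt 3) else ∅ := by
  split_ifs with h
  · ext y
    simp only [S2, Set.mem_preimage, Set.mem_setOf_eq, Set.mem_Icc]
    constructor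
    · rintro ⟨-, h2⟩
      have : |y| ≤ (1 - |x|)/Real.sqrt 3 := by
        rw [le_div_iff₀ sqrt3_pos]; linarith [h2]
      exact abs_le.mp this
    · rintro ⟨h1, h2⟩
      refine ⟨h, ?_⟩
      have : |y| ≤ (1 - |x|)/Real.sqrt 3 := abs_le.mpr ⟨h1, h2⟩
      rw [le_div_iff₀ sqrt3_pos] at this; linarith
  · ext y
    simp only [S2, Set.mem_preimage, Set.mem_setOf_eq, Set.mem_empty_iff_false, iff_false]
    rintro ⟨h1, -⟩; exact h h1

lemma vol_S2 : volume S2 = ENNReal.ofReal (Real.sqrt 3 / 2) := by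
  rw [show (volume : Measure (ℝ × ℝ)) = (volume : Measure ℝ).prod volume from rfl,
    Measure.prod_apply hS2]
  have key : ∀ x : ℝ, volume (Prod.mk x ⁻¹' S2) =
      Set.indicator (Set.Icc (-(1/2)) (1/2)) (fun x => ENNReal.ofReal (2 * ((1 - |x|)/Real.sqrt 3))) x := by
    intro x
    rw [slice_S2]
    by_cases h : |x| ≤ 1/2
    · rw [if_pos h, Real.volume_Icc, Set.indicator_of_mem (Set.mem_Icc.mpr (abs_le.mp h))]
      congr 1; ring
    · rw [if_neg h, measure_empty, Set.indicator_of_notMem]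
      intro hx; exact h (abs_le.mpr hx)
  simp only [key]
  rw [lintegral_indicator measurableSet_Icc,
    ← ofReal_integral_eq_lintegral_ofReal (f := fun x => 2 * ((1 - |x|)/Real.sqrt 3))
      (((continuous_const.mul ((continuous_const.sub continuous_abs).div_const _))).integrableOn_Icc)
      ((ae_restrict_iff' measurableSet_Icc).2 (Filter.Eventually.of_forall fun x hx => by
        have hx' : |x| ≤ 1/2 := abs_le.mpr (Set.mem_Icc.mp hx)
        have : (0:ℝ) ≤ 1 - |x| := by linarith
        positivity))]
  congr 1
  rw [MeasureTheory.integral_Icc_eq_integral_Ioc,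
    ← intervalIntegral.integral_of_le (by norm_num : (-(1/2):ℝ) ≤ 1/2)]
  have hi : ∀ a b : ℝ, IntervalIntegrable (fun x => 2 * ((1 - |x|)/Real.sqrt 3)) volume a b :=
    fun a b => ((continuous_const.mul ((continuous_const.sub continuous_abs).div_const _))).intervalIntegrable a b
  rw [← intervalIntegral.integral_add_adjacent_intervals (b := 0) (hi _ _) (hi _ _)]
  have e1 : ∫ x in (-(1/2):ℝ)..0, 2 * ((1 - |x|)/Real.sqrt 3)
      = ∫ x in (-(1/2):ℝ)..0, (2/Real.sqrt 3 + (2/Real.sqrt 3) * x) := by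
    apply intervalIntegral.integral_congr
    intro x hx
    rw [Set.uIcc_of_le (by norm_num : (-(1/2):ℝ) ≤ 0)] at hx
    simp only [abs_of_nonpos hx.2]; ring
  have e2 : ∫ x in (0:ℝ)..(1/2), 2 * ((1 - |x|)/Real.sqrt 3)
      = ∫ x in (0:ℝ)..(1/2), (2/Real.sqrt 3 - (2/Real.sqrt 3) * x) := by
    apply intervalIntegral.integral_congr
    intro x hx
    rw [Set.uIcc_of_le (by norm_num : (0:ℝ) ≤ 1/2)] at hx
    simp only [abs_of_nonneg hx.1]; ring
  rw [e1, e2]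
  have hc : Continuous fun x : ℝ => 2/Real.sqrt 3 * x := by continuity
  rw [intervalIntegral.integral_add intervalIntegrable_const (hc.intervalIntegrable _ _),
    intervalIntegral.integral_sub intervalIntegrable_const (hc.intervalIntegrable _ _)]
  rw [intervalIntegral.integral_const_mul, intervalIntegral.integral_const_mul, integral_id, integral_id,
    intervalIntegral.integral_const, intervalIntegral.integral_const, smul_eq_mul, smul_eq_mul]
  have h3 := sqrt3_sq
  have h3' := sqrt3_pos
  field_simp
  nlinarith [h3]

def lo (x : ℝ) : ℝ :=
  max (max (-((1 - |x|)/Real.sqrt 3)) (Real.sqrt 3 * x - 1)) (-(Real.sqrt 3 * x) - 1)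

lemma slice_P2 (x : ℝ) : (Prod.mk x ⁻¹' P2) =
    if |x| ≤ 1/2 then Set.Icc (lo x) ((1 - |x|)/Real.sqrt 3) else ∅ := by
  split_ifs with h
  · ext y
    simp only [P2, Set.mem_preimage, Set.mem_setOf_eq, Set.mem_Icc, lo, max_le_iff]
    constructor
    · rintro ⟨⟨-, h2⟩, h3, h4⟩
      have habs : |y| ≤ (1 - |x|)/Real.sqrt 3 := by rw [le_div_iff₀ sqrt3_pos]; linarith
      obtain ⟨hy1, hy2⟩ := abs_le.mp habs
      exact ⟨⟨⟨hy1, by linarith⟩, by linarith⟩, hy2⟩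
    · rintro ⟨⟨⟨hy1, hy2⟩, hy3⟩, hy4⟩
      have habs : |y| ≤ (1 - |x|)/Real.sqrt 3 := abs_le.mpr ⟨hy1, hy4⟩
      rw [le_div_iff₀ sqrt3_pos] at habs
      exact ⟨⟨h, by linarith⟩, by linarith, by linarith⟩
  · ext y
    simp only [P2, Set.mem_preimage, Set.mem_setOf_eq, Set.mem_empty_iff_false, iff_false]
    rintro ⟨⟨h1, -⟩, -⟩; exact h h1

lemma lin_int (A B a b : ℝ) : ∫ x in a..b, (A + B*x) = A*(b-a) + B*(b^2-a^2)/2 := by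
  have hc : Continuous fun x : ℝ => B * x := by continuity
  rw [intervalIntegral.integral_add intervalIntegrable_const (hc.intervalIntegrable _ _),
    intervalIntegral.integral_const_mul, integral_id, intervalIntegral.integral_const,
    smul_eq_mul]
  ring

set_option maxHeartbeats 1600000 in
lemma vol_P2 : volume P2 = ENNReal.ofReal (2 - 2/Real.sqrt 3) := by
  have h3 := sqrt3_sq
  have h3p := sqrt3_pos
  have h32 := sqrt3_lt_two
  have h31 := one_lt_sqrt3
  set r : ℝ := (Real.sqrt 3 - 1)/2 with hr
  have hr0 : 0 ≤ r := by rw [hr]; linarith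
  have hr2 : r ≤ 1/2 := by rw [hr]; linarith
  rw [show (volume : Measure (ℝ × ℝ)) = (volume : Measure ℝ).prod volume from rfl,
    Measure.prod_apply hP2]
  have key : ∀ x : ℝ, volume (Prod.mk x ⁻¹' P2) =
      Set.indicator (Set.Icc (-(1/2)) (1/2))
        (fun x => ENNReal.ofReal ((1 - |x|)/Real.sqrt 3 - lo x)) x := by
    intro x
    rw [slice_P2]
    by_cases h : |x| ≤ 1/2
    · rw [if_pos h, Real.volume_Icc, Set.indicator_of_mem (Set.mem_Icc.mpr (abs_le.mp h))]
    · rw [if_neg h, measure_empty, Set.indicator_of_notMem]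
      intro hx; exact h (abs_le.mpr hx)
  simp only [key]
  have hnn : ∀ x ∈ Set.Icc (-(1/2):ℝ) (1/2), 0 ≤ (1 - |x|)/Real.sqrt 3 - lo x := by
    intro x hx
    have hx' : |x| ≤ 1/2 := abs_le.mpr (Set.mem_Icc.mp hx)
    have h1 := neg_abs_le x
    have h2 := le_abs_self x
    rw [sub_nonneg, lo]
    have k0 := mul_le_mul_of_nonneg_left hx' h3p.le
    have k1 := mul_le_mul_of_nonneg_left h1 h3p.le
    have k2 := mul_le_mul_of_nonneg_left h2 h3p.le
    refine max_le (max_le ?_ ?_) ?_ <;> simp only [hdiv] <;>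
      nlinarith [h3, h31, h32, k0, k1, k2]
  have hcont : Continuous fun x : ℝ => (1 - |x|)/Real.sqrt 3 - lo x := by
    unfold lo; fun_prop
  rw [lintegral_indicator measurableSet_Icc,
    ← ofReal_integral_eq_lintegral_ofReal (hcont.integrableOn_Icc)
      ((ae_restrict_iff' measurableSet_Icc).2 (Filter.Eventually.of_forall hnn))]
  congr 1
  rw [MeasureTheory.integral_Icc_eq_integral_Ioc,
    ← intervalIntegral.integral_of_le (by norm_num : (-(1/2):ℝ) ≤ 1/2)]
  have hi : ∀ a b : ℝ, IntervalIntegrable (fun x => (1 - |x|)/Real.sqrt 3 - lo x) volume a b :=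
    fun a b => hcont.intervalIntegrable a b
  rw [← intervalIntegral.integral_add_adjacent_intervals (b := -r) (hi _ _) (hi _ _),
    ← intervalIntegral.integral_add_adjacent_intervals (a := -r) (b := 0) (hi _ _) (hi _ _),
    ← intervalIntegral.integral_add_adjacent_intervals (a := (0:ℝ)) (b := r) (hi _ _) (hi _ _)]
  have e1 : ∫ x in (-(1/2):ℝ)..(-r), ((1 - |x|)/Real.sqrt 3 - lo x)
      = ∫ x in (-(1/2):ℝ)..(-r), ((1/Real.sqrt 3 + 1) + (1/Real.sqrt 3 + Real.sqrt 3)*x) := by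
    apply intervalIntegral.integral_congr
    intro x hx
    rw [Set.uIcc_of_le (by linarith : (-(1/2):ℝ) ≤ -r)] at hx
    obtain ⟨ha, hb⟩ := hx
    have hb' : x ≤ 0 := by linarith
    simp only [lo, abs_of_nonpos hb']
    rw [max_eq_right (max_le
      (by simp only [hdiv]; nlinarith : -((1 - -x)/Real.sqrt 3) ≤ -(Real.sqrt 3 * x) - 1)
      (by nlinarith : Real.sqrt 3 * x - 1 ≤ -(Real.sqrt 3 * x) - 1))]
    simp only [hdiv]; ring
  have e2 : ∫ x in (-r:ℝ)..0, ((1 - |x|)/Real.sqrt 3 - lo x)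
      = ∫ x in (-r:ℝ)..0, (2/Real.sqrt 3 + (2/Real.sqrt 3)*x) := by
    apply intervalIntegral.integral_congr
    intro x hx
    rw [Set.uIcc_of_le (by linarith : (-r:ℝ) ≤ 0)] at hx
    obtain ⟨ha, hb⟩ := hx
    simp only [lo, abs_of_nonpos hb]
    rw [max_eq_left
        (by simp only [hdiv]; nlinarith : Real.sqrt 3 * x - 1 ≤ -((1 - -x)/Real.sqrt 3)),
      max_eq_left
        (by simp only [hdiv]; nlinarith : -(Real.sqrt 3 * x) - 1 ≤ -((1 - -x)/Real.sqrt 3))]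
    simp only [hdiv]; ring
  have e3 : ∫ x in (0:ℝ)..r, ((1 - |x|)/Real.sqrt 3 - lo x)
      = ∫ x in (0:ℝ)..r, (2/Real.sqrt 3 + (-(2/Real.sqrt 3))*x) := by
    apply intervalIntegral.integral_congr
    intro x hx
    rw [Set.uIcc_of_le hr0] at hx
    obtain ⟨ha, hb⟩ := hx
    simp only [lo, abs_of_nonneg ha]
    rw [max_eq_left
        (by simp only [hdiv]; nlinarith : Real.sqrt 3 * x - 1 ≤ -((1 - x)/Real.sqrt 3)),
      max_eq_left
        (by simp only [hdiv]; nlinarith : -(Real.sqrt 3 * x) - 1 ≤ -((1 - x)/Real.sqrt 3))]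
    simp only [hdiv]; ring
  have e4 : ∫ x in (r:ℝ)..(1/2), ((1 - |x|)/Real.sqrt 3 - lo x)
      = ∫ x in (r:ℝ)..(1/2), ((1/Real.sqrt 3 + 1) + (-(1/Real.sqrt 3 + Real.sqrt 3))*x) := by
    apply intervalIntegral.integral_congr
    intro x hx
    rw [Set.uIcc_of_le hr2] at hx
    obtain ⟨ha, hb⟩ := hx
    have ha' : 0 ≤ x := by linarith
    simp only [lo, abs_of_nonneg ha']
    rw [max_eq_right
        (by simp only [hdiv]; nlinarith : -((1 - x)/Real.sqrt 3) ≤ Real.sqrt 3 * x - 1),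
      max_eq_left (by nlinarith : -(Real.sqrt 3 * x) - 1 ≤ Real.sqrt 3 * x - 1)]
    simp only [hdiv]; ring
  rw [e1, e2, e3, e4, lin_int, lin_int, lin_int, lin_int]
  rw [hr]
  have hne : Real.sqrt 3 ≠ 0 := ne_of_gt h3p
  field_simp
  nlinarith [h3]

/-! ### Main theorem -/

theorem hexagon_and_pal_area :
    volume hexagon = ENNReal.ofReal (Real.sqrt 3 / 2) ∧
    volume palCover = ENNReal.ofReal (2 - 2 / Real.sqrt 3) := by
  constructor
  · rw [hexagon_eq_S, S_preimage, hF.measure_preimage hS2.nullMeasurableSet, vol_S2]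
  · rw [palCover_eq, hF.measure_preimage hP2.nullMeasurableSet, vol_P2]
end
end
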